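/- arXiv:1410.7765 — 2 statements merged into one kernel-verified Lean document; each statement's English description precedes it below -/
import Mathlib

section
/- Let y : [a,b] → ℂ be continuously differentiable with y(a) = y(b) = 0. Then ∫_a^b |y(x)|² dx ≤ ((b-a)/π)² ∫_a^b |y'(x)|² dx. -/
open intervalIntegral

open MeasureTheory Complex Set Filter AddCircle

noncomputable def wirtExt (a : ℝ) (s : ℂ) (h : ℝ → ℂ) : ℝ → ℂ :=
  fun x => if x ≤ a then s * h (2*a - x) else h x

lemma wirtExt_contOn (a b : ℝ) (s : ℂ) (h : ℝ → ℂ)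
    (hc : ContinuousOn h (Set.Icc a b)) (h1 : s * h a = h a) :
    ContinuousOn (wirtExt a s h) (Set.Icc (2*a-b) b) := by
  unfold wirtExt
  apply ContinuousOn.if
  · intro x hx
    have hfr : frontier {x : ℝ | x ≤ a} = {a} := frontier_Iic
    rw [hfr] at hx
    have hx' : x = a := hx.2
    rw [hx', show 2*a - a = a from by ring]
    exact h1
  · have hcl : closure {x : ℝ | x ≤ a} = Iic a := closure_Iic a
    rw [hcl]
    have maps : MapsTo (fun x => 2*a - x) (Icc (2*a-b) b ∩ Iic a) (Icc a b) := by
      intro x hx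
      obtain ⟨⟨h1', _⟩, h2'⟩ := hx
      simp only [Set.mem_Icc]
      simp only [Set.mem_Iic] at h2'
      constructor <;> linarith
    exact continuousOn_const.mul (hc.comp ((continuous_const.sub continuous_id).continuousOn) maps)
  · have hcl : closure {x : ℝ | ¬ x ≤ a} = Ici a := by
      have : {x : ℝ | ¬ x ≤ a} = Ioi a := by ext x; simp
      rw [this, closure_Ioi]
    rw [hcl]
    exact hc.mono (fun x hx => ⟨hx.2, hx.1.2⟩)

lemma wirtExt_lift_cont (a b : ℝ) (hab : a < b) [Fact (0 < 2*(b-a))] (s : ℂ) (h : ℝ → ℂ)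
    (hc : ContinuousOn h (Set.Icc a b)) (h1 : s * h a = h a) (h2 : s * h b = h b) :
    Continuous (AddCircle.liftIco (2*(b-a)) (2*a-b) (wirtExt a s h)) := by
  have e1 : (2*a-b) + 2*(b-a) = b := by ring
  apply AddCircle.liftIco_continuous
  · rw [e1]
    unfold wirtExt
    rw [if_pos (by linarith), if_neg (by linarith), show 2*a - (2*a-b) = b from by ring]
    exact h2
  · rw [e1]
    exact wirtExt_contOn a b s h hc h1

lemma wirtExt_coeff (a b : ℝ) (hab : a < b) [Fact (0 < 2*(b-a))] (s : ℂ) (h : ℝ → ℂ)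
    (hc : ContinuousOn h (Set.Icc a b)) (h1 : s * h a = h a) (n : ℤ) :
    fourierCoeff (AddCircle.liftIco (2*(b-a)) (2*a-b) (wirtExt a s h)) n
      = (1/(2*(b-a)) : ℝ) • ∫ x in a..b,
          ((fourier (-n) (x : AddCircle (2*(b-a))) : ℂ)
            + s * (fourier (-n) ((2*a - x : ℝ) : AddCircle (2*(b-a))) : ℂ)) * h x := by
  set P := 2*(b-a) with hPdef
  set c := 2*a-b with hcdef
  have hca : c < a := by rw [hcdef]; linarith
  have hcb : c < b := by rw [hcdef]; linarith
  have hcP : c + P = b := by rw [hcdef, hPdef]; ring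
  rw [fourierCoeff_eq_intervalIntegral _ n c, hcP]
  congr 1
  have hGcont := wirtExt_contOn a b s h hc h1
  have hfc : Continuous fun x : ℝ => (fourier (-n) (x : AddCircle P) : ℂ) :=
    (map_continuous (fourier (-n))).comp (AddCircle.continuous_mk' _)
  have hfc2 : Continuous fun x : ℝ => (fourier (-n) ((2*a - x : ℝ) : AddCircle P) : ℂ) :=
    hfc.comp (continuous_const.sub continuous_id)
  -- replace lift by wirtExt a.e.
  have step1 : (∫ x in c..b, (fourier (-n) (x : AddCircle P) : ℂ) •
        (AddCircle.liftIco P c (wirtExt a s h)) x)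
      = ∫ x in c..b, (fourier (-n) (x : AddCircle P) : ℂ) • wirtExt a s h x := by
    apply intervalIntegral.integral_congr_ae
    have hne : ∀ᵐ x : ℝ, x ≠ b := by
      have h0 := measure_eq_zero_iff_ae_notMem.mp (measure_singleton (b : ℝ) (μ := volume))
      filter_upwards [h0] with x hx
      simpa using hx
    filter_upwards [hne] with x hx hxI
    have hxI' : x ∈ Ioc c b := by rwa [Set.uIoc_of_le hcb.le] at hxI
    rw [AddCircle.liftIco_coe_apply]
    rw [hcP]
    exact ⟨hxI'.1.le, lt_of_le_of_ne hxI'.2 hx⟩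
  rw [step1]
  -- integrability
  have hint : ∀ u v : ℝ, u ∈ Icc c b → v ∈ Icc c b → IntervalIntegrable
      (fun x => (fourier (-n) (x : AddCircle P) : ℂ) • wirtExt a s h x) volume u v := by
    intro u v hu hv
    apply ContinuousOn.intervalIntegrable
    apply (hfc.continuousOn.smul hGcont).mono
    rw [← hcdef]
    exact Set.uIcc_subset_Icc hu hv
  -- split the integral at a
  have hsplit : (∫ x in c..b, (fourier (-n) (x : AddCircle P) : ℂ) • wirtExt a s h x)
      = (∫ x in c..a, (fourier (-n) (x : AddCircle P) : ℂ) • wirtExt a s h x)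
        + ∫ x in a..b, (fourier (-n) (x : AddCircle P) : ℂ) • wirtExt a s h x := by
    rw [intervalIntegral.integral_add_adjacent_intervals
      (hint c a (Set.left_mem_Icc.2 hcb.le) ⟨hca.le, hab.le⟩)
      (hint a b ⟨hca.le, hab.le⟩ (Set.right_mem_Icc.2 hcb.le))]
  rw [hsplit]
  -- first piece: reflect
  have hrefl : (∫ x in c..a, (fourier (-n) (x : AddCircle P) : ℂ) • wirtExt a s h x)
      = ∫ u in a..b, (fourier (-n) ((2*a - u : ℝ) : AddCircle P) : ℂ) • (s * h u) := by
    have e1 : (∫ x in c..a, (fourier (-n) (x : AddCircle P) : ℂ) • wirtExt a s h x)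
        = ∫ x in c..a, (fun u : ℝ =>
            (fourier (-n) ((2*a - u : ℝ) : AddCircle P) : ℂ) • (s * h u)) (2*a - x) := by
      apply intervalIntegral.integral_congr
      intro x hx
      have hx' : x ∈ Icc c a := by rwa [Set.uIcc_of_le hca.le] at hx
      have hxa : x ≤ a := hx'.2
      simp only [wirtExt, if_pos hxa]
      have : 2*a - (2*a - x) = x := by ring
      rw [this]
    rw [e1]
    have e2 : 2*a - a = a := by ring
    have e3 : 2*a - c = b := by rw [hcdef]; ring
    have hcomp := intervalIntegral.integral_comp_sub_left (a := c) (b := a)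
      (fun u : ℝ => (fourier (-n) ((2*a - u : ℝ) : AddCircle P) : ℂ) • (s * h u)) (2*a)
    exact hcomp.trans (by rw [e2, e3])
  rw [hrefl]
  -- combine the two integrals
  have hi1 : IntervalIntegrable
      (fun u => (fourier (-n) ((2*a - u : ℝ) : AddCircle P) : ℂ) • (s * h u)) volume a b := by
    apply ContinuousOn.intervalIntegrable
    rw [Set.uIcc_of_le hab.le]
    exact hfc2.continuousOn.smul (continuousOn_const.mul hc)
  have hi2 : IntervalIntegrable
      (fun x => (fourier (-n) (x : AddCircle P) : ℂ) • h x) volume a b := by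
    apply ContinuousOn.intervalIntegrable
    rw [Set.uIcc_of_le hab.le]
    exact hfc.continuousOn.smul hc
  have e4 : (∫ x in a..b, (fourier (-n) (x : AddCircle P) : ℂ) • wirtExt a s h x)
      = ∫ x in a..b, (fourier (-n) (x : AddCircle P) : ℂ) • h x := by
    apply intervalIntegral.integral_congr
    intro x hx
    have hx' : x ∈ Icc a b := by rwa [Set.uIcc_of_le hab.le] at hx
    by_cases hxa : x ≤ a
    · have hxa' : x = a := le_antisymm hxa hx'.1
      rw [hxa']
      simp only [wirtExt, if_pos le_rfl]
      rw [show 2*a - a = a from by ring, h1]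
    · simp only [wirtExt, if_neg hxa]
  rw [e4, ← intervalIntegral.integral_add hi1 hi2]
  apply intervalIntegral.integral_congr
  intro x _
  simp only [smul_eq_mul]
  ring

lemma wirtExt_int (a b : ℝ) (hab : a < b) [Fact (0 < 2*(b-a))] (s : ℂ) (hs : ‖s‖ = 1)
    (h : ℝ → ℂ) (hc : ContinuousOn h (Set.Icc a b)) (h1 : s * h a = h a) :
    ∫ t : AddCircle (2*(b-a)), ‖(AddCircle.liftIco (2*(b-a)) (2*a-b) (wirtExt a s h)) t‖^2
        ∂haarAddCircle
      = (1/(b-a)) * ∫ x in a..b, ‖h x‖^2 := by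
  set P := 2*(b-a) with hPdef
  set c := 2*a-b with hcdef
  have hP : 0 < P := by rw [hPdef]; linarith
  have hca : c < a := by rw [hcdef]; linarith
  have hcb : c < b := by rw [hcdef]; linarith
  have hcP : c + P = b := by rw [hcdef, hPdef]; ring
  set G := AddCircle.liftIco P c (wirtExt a s h) with hGdef
  have hGcont := wirtExt_contOn a b s h hc h1
  have key : (∫ x in c..c+P, ‖G (x : AddCircle P)‖^2) = ∫ t : AddCircle P, ‖G t‖^2 :=
    AddCircle.intervalIntegral_preimage P c (fun t => ‖G t‖^2)
  have hvol : (∫ t : AddCircle P, ‖G t‖^2)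
      = P * ∫ t : AddCircle P, ‖G t‖^2 ∂haarAddCircle := by
    rw [AddCircle.volume_eq_smul_haarAddCircle, MeasureTheory.integral_smul_measure,
      ENNReal.toReal_ofReal hP.le, smul_eq_mul]
  -- now compute the interval integral
  have step1 : (∫ x in c..c+P, ‖G (x : AddCircle P)‖^2)
      = ∫ x in c..b, ‖wirtExt a s h x‖^2 := by
    rw [hcP]
    apply intervalIntegral.integral_congr_ae
    have hne : ∀ᵐ x : ℝ, x ≠ b := by
      have h0 := measure_eq_zero_iff_ae_notMem.mp (measure_singleton (b : ℝ) (μ := volume))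
      filter_upwards [h0] with x hx
      simpa using hx
    filter_upwards [hne] with x hx hxI
    have hxI' : x ∈ Ioc c b := by rwa [Set.uIoc_of_le hcb.le] at hxI
    rw [hGdef, AddCircle.liftIco_coe_apply]
    rw [hcP]
    exact ⟨hxI'.1.le, lt_of_le_of_ne hxI'.2 hx⟩
  have hint : ∀ u v : ℝ, u ∈ Icc c b → v ∈ Icc c b → IntervalIntegrable
      (fun x => ‖wirtExt a s h x‖^2) volume u v := by
    intro u v hu hv
    apply ContinuousOn.intervalIntegrable
    apply ((hGcont.norm).pow 2).mono
    rw [← hcdef]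
    exact Set.uIcc_subset_Icc hu hv
  have hsplit : (∫ x in c..b, ‖wirtExt a s h x‖^2)
      = (∫ x in c..a, ‖wirtExt a s h x‖^2) + ∫ x in a..b, ‖wirtExt a s h x‖^2 := by
    rw [intervalIntegral.integral_add_adjacent_intervals
      (hint c a (Set.left_mem_Icc.2 hcb.le) ⟨hca.le, hab.le⟩)
      (hint a b ⟨hca.le, hab.le⟩ (Set.right_mem_Icc.2 hcb.le))]
  have hrefl : (∫ x in c..a, ‖wirtExt a s h x‖^2) = ∫ u in a..b, ‖h u‖^2 := by
    have e1 : (∫ x in c..a, ‖wirtExt a s h x‖^2)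
        = ∫ x in c..a, (fun u : ℝ => ‖h u‖^2) (2*a - x) := by
      apply intervalIntegral.integral_congr
      intro x hx
      have hx' : x ∈ Icc c a := by rwa [Set.uIcc_of_le hca.le] at hx
      simp only [wirtExt, if_pos hx'.2, norm_mul, hs, one_mul]
    rw [e1]
    have hcomp := intervalIntegral.integral_comp_sub_left (a := c) (b := a)
      (fun u : ℝ => ‖h u‖^2) (2*a)
    refine hcomp.trans ?_
    rw [show 2*a - a = a from by ring, show 2*a - c = b from by rw [hcdef]; ring]
  have hlast : (∫ x in a..b, ‖wirtExt a s h x‖^2) = ∫ x in a..b, ‖h x‖^2 := by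
    apply intervalIntegral.integral_congr
    intro x hx
    have hx' : x ∈ Icc a b := by rwa [Set.uIcc_of_le hab.le] at hx
    by_cases hxa : x ≤ a
    · have hxa' : x = a := le_antisymm hxa hx'.1
      rw [hxa']
      simp only [wirtExt, if_pos le_rfl]
      rw [show 2*a - a = a from by ring, h1]
    · simp only [wirtExt, if_neg hxa]
  have : P * ∫ t : AddCircle P, ‖G t‖^2 ∂haarAddCircle = 2 * ∫ x in a..b, ‖h x‖^2 := by
    rw [← hvol, ← key, step1, hsplit, hrefl, hlast]; ring
  have hba : (0:ℝ) < b - a := by linarith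
  calc ∫ t : AddCircle P, ‖G t‖^2 ∂haarAddCircle
      = (2 * ∫ x in a..b, ‖h x‖^2) / P := by
        rw [eq_div_iff hP.ne', mul_comm]
        exact this
    _ = (1/(b-a)) * ∫ x in a..b, ‖h x‖^2 := by
        rw [hPdef]
        field_simp

lemma wirt_parseval {T : ℝ} [hT : Fact (0 < T)] (f : AddCircle T → ℂ) (hf : Continuous f) :
    Summable (fun i : ℤ => ‖fourierCoeff f i‖^2) ∧
    ∑' i : ℤ, ‖fourierCoeff f i‖ ^ 2 = ∫ t : AddCircle T, ‖f t‖ ^ 2 ∂haarAddCircle := by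
  set F : Lp ℂ 2 (@haarAddCircle T hT) :=
    ContinuousMap.toLp 2 haarAddCircle ℂ (⟨f, hf⟩ : C(AddCircle T, ℂ)) with hFdef
  have hFae : (F : AddCircle T → ℂ) =ᵐ[haarAddCircle] f := by
    have := ContinuousMap.coeFn_toLp (p := 2) haarAddCircle (𝕜 := ℂ) (⟨f, hf⟩ : C(AddCircle T, ℂ))
    exact this
  have hcoeff : ∀ i : ℤ, fourierCoeff (F : AddCircle T → ℂ) i = fourierCoeff f i := by
    intro i
    unfold fourierCoeff
    apply MeasureTheory.integral_congr_ae
    filter_upwards [hFae] with t ht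
    rw [ht]
  constructor
  · have hm := lp.memℓp (fourierBasis.repr F)
    have hs := hm.summable (by norm_num : (0:ℝ) < (2 : ENNReal).toReal)
    have : (fun i : ℤ => ‖fourierCoeff f i‖^2)
        = fun i : ℤ => ‖(fourierBasis.repr F) i‖ ^ (2 : ENNReal).toReal := by
      funext i
      rw [fourierBasis_repr, hcoeff i,
        show ((2:ENNReal).toReal) = ((2:ℕ):ℝ) from by norm_num, Real.rpow_natCast]
    rw [this]
    exact hs
  · have hts : ∑' i : ℤ, ‖fourierCoeff f i‖ ^ 2
        = ∑' i : ℤ, ‖fourierCoeff (F : AddCircle T → ℂ) i‖ ^ 2 :=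
      tsum_congr (fun i => by rw [hcoeff i])
    rw [hts, tsum_sq_fourierCoeff F]
    apply MeasureTheory.integral_congr_ae
    filter_upwards [hFae] with t ht
    rw [ht]

lemma wirt_parts {a b : ℝ} (hab : a < b) [Fact (0 < 2*(b-a))] (y y' : ℝ → ℂ)
    (hderiv : ∀ x ∈ Set.Icc a b, HasDerivAt y (y' x) x)
    (hcont : ContinuousOn y' (Set.Icc a b))
    (ha : y a = 0) (hb : y b = 0) {n : ℤ} (hn : n ≠ 0) :
    ∫ x in a..b, ((fourier (-n) (x : AddCircle (2*(b-a))) : ℂ)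
            + (-1 : ℂ) * (fourier (-n) ((2*a - x : ℝ) : AddCircle (2*(b-a))) : ℂ)) * y x
      = (2*(b-a) : ℝ) / (2 * Real.pi * I * n) *
        ∫ x in a..b, ((fourier (-n) (x : AddCircle (2*(b-a))) : ℂ)
            + (1 : ℂ) * (fourier (-n) ((2*a - x : ℝ) : AddCircle (2*(b-a))) : ℂ)) * y' x := by
  set P := 2*(b-a) with hPdef
  have hP : 0 < P := by rw [hPdef]; linarith
  set E : ℝ → ℂ := fun x => (fourier (-n) (x : AddCircle P) : ℂ) with hEdef
  set C : ℂ := -((P:ℂ) / (2 * Real.pi * I * n)) with hCdef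
  have hPi : (Real.pi : ℂ) ≠ 0 := Complex.ofReal_ne_zero.mpr Real.pi_ne_zero
  have hnC : (n:ℂ) ≠ 0 := Int.cast_ne_zero.mpr hn
  have hPC : (P:ℂ) ≠ 0 := Complex.ofReal_ne_zero.mpr hP.ne'
  have hEc : Continuous E := (map_continuous (fourier (-n))).comp (AddCircle.continuous_mk' _)
  have hErc : Continuous (fun x : ℝ => E (2*a - x)) :=
    hEc.comp (continuous_const.sub continuous_id)
  have hK : (2 * (Real.pi:ℂ) * I * n) ≠ 0 :=
    mul_ne_zero (mul_ne_zero (mul_ne_zero two_ne_zero hPi) I_ne_zero) hnC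
  have hu : ∀ x : ℝ, HasDerivAt (fun t => C * (E t + E (2*a - t))) (E x - E (2*a - x)) x := by
    intro x
    have h1 : HasDerivAt E (-2 * Real.pi * I * n / P * E x) x := hasDerivAt_fourier_neg P n x
    have hinner : HasDerivAt (fun t : ℝ => 2*a - t) (-1) x := by
      simpa using (hasDerivAt_id x).const_sub (2*a)
    have h2 : HasDerivAt (fun t : ℝ => E (2*a - t))
        (2 * Real.pi * I * n / P * E (2*a - x)) x := by
      have h2a := HasDerivAt.scomp x (hasDerivAt_fourier_neg P n (2*a - x)) hinner
      convert h2a using 1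
      · rfl
      · rfl
      rw [neg_one_smul ℝ]
      ring
    have h3 := (h1.add h2).const_mul C
    convert h3 using 1
    · rfl
    · rfl
    rw [hCdef]
    clear_value E P
    field_simp
    ring
  have hvInt : IntervalIntegrable y' MeasureTheory.volume a b := by
    apply ContinuousOn.intervalIntegrable
    rwa [Set.uIcc_of_le hab.le]
  have huInt : IntervalIntegrable (fun x => E x - E (2*a - x)) MeasureTheory.volume a b :=
    (hEc.sub hErc).intervalIntegrable a b
  have hparts := intervalIntegral.integral_mul_deriv_eq_deriv_mul
    (u := fun t => C * (E t + E (2*a - t))) (v := y)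
    (u' := fun x => E x - E (2*a - x)) (v' := y')
    (fun x _ => hu x)
    (fun x hx => hderiv x (by rwa [Set.uIcc_of_le hab.le] at hx))
    huInt hvInt
  rw [ha, hb, mul_zero, mul_zero, sub_zero, zero_sub] at hparts
  beta_reduce at hparts
  have hL : (∫ x in a..b, (E x + (-1:ℂ) * E (2*a - x)) * y x)
      = ∫ x in a..b, (E x - E (2*a - x)) * y x := by
    apply intervalIntegral.integral_congr; intro x _; ring
  have hR : (∫ x in a..b, (E x + (1:ℂ) * E (2*a - x)) * y' x)
      = ∫ x in a..b, (E x + E (2*a - x)) * y' x := by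
    apply intervalIntegral.integral_congr; intro x _; ring
  rw [hL, hR]
  have hC2 : (∫ x in a..b, C * (E x + E (2*a - x)) * y' x)
      = C * ∫ x in a..b, (E x + E (2*a - x)) * y' x := by
    rw [← intervalIntegral.integral_const_mul]
    apply intervalIntegral.integral_congr; intro x _; ring
  rw [hC2] at hparts
  have hstep : (∫ x in a..b, (E x - E (2*a - x)) * y x)
      = (-C) * ∫ x in a..b, (E x + E (2*a - x)) * y' x := by
    linear_combination hparts
  rw [hstep, hCdef]
  congr 1
  clear_value P
  field_simp

/-- Wirtinger-type inequality for complex-valued functions vanishing at both endpoints. -/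
theorem wirtinger_inequality (a b : ℝ) (hab : a < b) (y y' : ℝ → ℂ)
    (hderiv : ∀ x ∈ Set.Icc a b, HasDerivAt y (y' x) x)
    (hcont : ContinuousOn y' (Set.Icc a b))
    (ha : y a = 0) (hb : y b = 0) :
    ∫ x in a..b, ‖y x‖ ^ 2 ≤ ((b - a) / Real.pi) ^ 2 * ∫ x in a..b, ‖y' x‖ ^ 2 := by
  have hπ := Real.pi_pos
  have hba : (0:ℝ) < b - a := by linarith
  haveI : Fact (0 < 2*(b-a)) := ⟨by linarith⟩
  have hycont : ContinuousOn y (Set.Icc a b) :=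
    fun x hx => (hderiv x hx).continuousAt.continuousWithinAt
  have hy1 : (-1 : ℂ) * y a = y a := by rw [ha]; ring
  have hy2 : (-1 : ℂ) * y b = y b := by rw [hb]; ring
  have hy1' : (1 : ℂ) * y' a = y' a := one_mul _
  have hy2' : (1 : ℂ) * y' b = y' b := one_mul _
  set G := AddCircle.liftIco (2*(b-a)) (2*a-b) (wirtExt a (-1) y) with hGdef
  set G' := AddCircle.liftIco (2*(b-a)) (2*a-b) (wirtExt a 1 y') with hG'def
  have hGc : Continuous G := wirtExt_lift_cont a b hab (-1) y hycont hy1 hy2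
  have hG'c : Continuous G' := wirtExt_lift_cont a b hab 1 y' hcont hy1' hy2'
  obtain ⟨hsumG, hparsG⟩ := wirt_parseval G hGc
  obtain ⟨hsumG', hparsG'⟩ := wirt_parseval G' hG'c
  -- coefficient bound
  have hbound : ∀ n : ℤ, ‖fourierCoeff G n‖ ≤ ((b-a)/Real.pi) * ‖fourierCoeff G' n‖ := by
    intro n
    by_cases hn : n = 0
    · subst hn
      have hzero : fourierCoeff G 0 = 0 := by
        rw [hGdef, wirtExt_coeff a b hab (-1) y hycont hy1 0]
        have hzz : (∫ x in a..b, ((fourier (-(0:ℤ)) (x : AddCircle (2*(b-a))) : ℂ)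
            + (-1 : ℂ) * (fourier (-(0:ℤ)) ((2*a - x : ℝ) : AddCircle (2*(b-a))) : ℂ)) * y x)
            = ∫ x in a..b, (0:ℂ) := by
          apply intervalIntegral.integral_congr
          intro x _
          simp [fourier_zero]
        rw [hzz]
        simp
      rw [hzero]
      simp
      positivity
    · have hrel : fourierCoeff G n
          = ((2*(b-a) : ℝ) / (2 * Real.pi * I * n)) * fourierCoeff G' n := by
        rw [hGdef, hG'def, wirtExt_coeff a b hab (-1) y hycont hy1 n,
          wirtExt_coeff a b hab 1 y' hcont hy1' n,
          wirt_parts hab y y' hderiv hcont ha hb hn]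
        simp only [Complex.real_smul]
        ring
      rw [hrel, norm_mul]
      apply mul_le_mul_of_nonneg_right _ (norm_nonneg _)
      -- ‖(2(b-a))/(2πIn)‖ ≤ (b-a)/π
      have hnorm : ‖((2*(b-a) : ℝ) : ℂ) / (2 * Real.pi * I * n)‖
          = (2*(b-a)) / (2 * Real.pi * |(n:ℝ)|) := by
        simp only [norm_div, norm_mul, Complex.norm_real, Complex.norm_I,
          Complex.norm_intCast, Complex.norm_two, Real.norm_eq_abs, mul_one, abs_two]
        rw [abs_of_pos hπ, abs_of_pos hba]
      rw [hnorm]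
      have hn1 : (1:ℝ) ≤ |(n:ℝ)| := by
        rw [← Int.cast_abs]
        exact_mod_cast Int.one_le_abs hn
      rw [div_le_div_iff₀ (by positivity) (by positivity)]
      have : 2 * (b-a) * Real.pi ≤ 2 * (b-a) * (Real.pi * |(n:ℝ)|) := by
        apply mul_le_mul_of_nonneg_left _ (by linarith)
        nlinarith
      nlinarith
  -- sum bound
  have hsum : ∑' i : ℤ, ‖fourierCoeff G i‖ ^ 2
      ≤ ((b-a)/Real.pi)^2 * ∑' i : ℤ, ‖fourierCoeff G' i‖ ^ 2 := by
    rw [← tsum_mul_left]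
    apply Summable.tsum_le_tsum _ hsumG (hsumG'.mul_left _)
    intro n
    have h1 := hbound n
    calc ‖fourierCoeff G n‖^2 ≤ (((b-a)/Real.pi) * ‖fourierCoeff G' n‖)^2 := by
          apply pow_le_pow_left₀ (norm_nonneg _) h1
      _ = ((b-a)/Real.pi)^2 * ‖fourierCoeff G' n‖^2 := by ring
  -- put together
  have hIG : ∫ t : AddCircle (2*(b-a)), ‖G t‖^2 ∂haarAddCircle
      = (1/(b-a)) * ∫ x in a..b, ‖y x‖^2 :=
    wirtExt_int a b hab (-1) (by simp) y hycont hy1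
  have hIG' : ∫ t : AddCircle (2*(b-a)), ‖G' t‖^2 ∂haarAddCircle
      = (1/(b-a)) * ∫ x in a..b, ‖y' x‖^2 :=
    wirtExt_int a b hab 1 (by simp) y' hcont hy1'
  rw [hparsG, hIG] at hsum
  rw [hparsG', hIG'] at hsum
  have hfin : (1/(b-a)) * ∫ x in a..b, ‖y x‖^2
      ≤ ((b-a)/Real.pi)^2 * ((1/(b-a)) * ∫ x in a..b, ‖y' x‖^2) := hsum
  have h2 := mul_le_mul_of_nonneg_left hfin (le_of_lt hba)
  calc ∫ x in a..b, ‖y x‖ ^ 2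
      = (b-a) * ((1/(b-a)) * ∫ x in a..b, ‖y x‖^2) := by field_simp
    _ ≤ (b-a) * (((b-a)/Real.pi)^2 * ((1/(b-a)) * ∫ x in a..b, ‖y' x‖^2)) := h2
    _ = ((b-a)/Real.pi)^2 * ∫ x in a..b, ‖y' x‖^2 := by field_simp
end

section
/- The functions h(u) = (sin(πu)/(πu))² · 1/(1−u²) and ĥ(α) = max(1 − |α| + sin(2π|α|)/(2π), 0) form a Fourier transform pair: ĥ(α) = ∫_{−∞}^{∞} h(u) e^{2πiαu} du. -/
open Real Complex MeasureTheory

noncomputable def Hfun : ℝ → ℂ := fun α =>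
  ((max (1 - |α| + Real.sin (2 * Real.pi * |α|) / (2 * Real.pi)) 0 : ℝ) : ℂ)

noncomputable def hfun : ℝ → ℂ := fun u =>
  (((Real.sin (Real.pi * u) / (Real.pi * u)) ^ 2 * (1 / (1 - u ^ 2)) : ℝ) : ℂ)

lemma H_nonneg_of_le_one {t : ℝ} (h0 : 0 ≤ t) (h1 : t ≤ 1) :
    0 ≤ 1 - t + Real.sin (2 * Real.pi * t) / (2 * Real.pi) := by
  have hπ : (0:ℝ) < 2 * Real.pi := by positivity
  have h2 : Real.sin (2 * Real.pi * (1 - t)) ≤ 2 * Real.pi * (1 - t) :=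
    Real.sin_le (by nlinarith)
  have h3 : Real.sin (2 * Real.pi * (1 - t)) = - Real.sin (2 * Real.pi * t) := by
    have : 2 * Real.pi * (1 - t) = -(2 * Real.pi * t) + 2 * Real.pi := by ring
    rw [this, Real.sin_add_two_pi, Real.sin_neg]
  rw [h3] at h2
  have h4 : (0:ℝ) ≤ (2 * Real.pi * (1-t) + Real.sin (2*Real.pi*t)) / (2*Real.pi) :=
    div_nonneg (by linarith) hπ.le
  calc (0:ℝ) ≤ (2 * Real.pi * (1-t) + Real.sin (2*Real.pi*t)) / (2*Real.pi) := h4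
    _ = 1 - t + Real.sin (2 * Real.pi * t) / (2 * Real.pi) := by field_simp

lemma H_zero_of_one_le {t : ℝ} (h1 : 1 ≤ t) :
    1 - t + Real.sin (2 * Real.pi * t) / (2 * Real.pi) ≤ 0 := by
  have hπ : (0:ℝ) < 2 * Real.pi := by positivity
  have h2 : Real.sin (2 * Real.pi * (t - 1)) ≤ 2 * Real.pi * (t - 1) :=
    Real.sin_le (by nlinarith)
  have h3 : Real.sin (2 * Real.pi * (t - 1)) = Real.sin (2 * Real.pi * t) := by
    have : 2 * Real.pi * (t - 1) = 2 * Real.pi * t - 2 * Real.pi := by ring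
    rw [this, Real.sin_sub_two_pi]
  rw [h3] at h2
  have h4 : Real.sin (2 * Real.pi * t) / (2 * Real.pi) ≤ t - 1 :=
    (div_le_iff₀ hπ).2 (by linarith)
  linarith

lemma Hfun_eq_of_mem {α : ℝ} (h : |α| ≤ 1) :
    Hfun α = ((1 - |α| + Real.sin (2 * Real.pi * |α|) / (2 * Real.pi) : ℝ) : ℂ) := by
  unfold Hfun
  rw [max_eq_left (H_nonneg_of_le_one (abs_nonneg α) h)]

lemma Hfun_zero_of_ge {α : ℝ} (h : 1 ≤ |α|) : Hfun α = 0 := by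
  unfold Hfun
  rw [max_eq_right (H_zero_of_one_le h)]
  simp

lemma Hfun_continuous : Continuous Hfun := by
  unfold Hfun
  exact Complex.continuous_ofReal.comp (Continuous.max (by fun_prop) continuous_const)

lemma Hfun_integrable : Integrable Hfun := by
  apply Hfun_continuous.integrable_of_hasCompactSupport
  apply HasCompactSupport.intro (isCompact_Icc (a := (-1:ℝ)) (b := 1))
  intro x hx
  apply Hfun_zero_of_ge
  simp only [Set.mem_Icc, not_and_or, not_le] at hx
  rcases hx with h | h
  · rw [abs_of_neg (by linarith)]; linarith
  · rw [abs_of_pos (by linarith)]; linarith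

lemma sin_sq_le_A (u : ℝ) : Real.sin (Real.pi * u) ^ 2 ≤ (Real.pi * u) ^ 2 := by
  have h := Real.abs_sin_le_abs (x := Real.pi * u)
  calc Real.sin (Real.pi * u) ^ 2 = |Real.sin (Real.pi * u)| ^ 2 := (_root_.sq_abs _).symm
    _ ≤ |Real.pi * u| ^ 2 := by gcongr <;> simp [abs_nonneg]
    _ = (Real.pi * u) ^ 2 := _root_.sq_abs _

lemma sin_sq_le_B (u : ℝ) : Real.sin (Real.pi * u) ^ 2 ≤ Real.pi ^ 2 * |1 - u ^ 2| := by
  have h1 : |Real.sin (Real.pi * u)| ≤ |Real.pi * (1 - u)| := by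
    have : Real.sin (Real.pi * (1 - u)) = Real.sin (Real.pi * u) := by
      have : Real.pi * (1 - u) = Real.pi - Real.pi * u := by ring
      rw [this, Real.sin_pi_sub]
    rw [← this]
    exact Real.abs_sin_le_abs
  have h2 : |Real.sin (Real.pi * u)| ≤ |Real.pi * (1 + u)| := by
    have : Real.sin (Real.pi * (1 + u)) = - Real.sin (Real.pi * u) := by
      have : Real.pi * (1 + u) = Real.pi * u + Real.pi := by ring
      rw [this, Real.sin_add_pi]
    have h3 : |Real.sin (Real.pi * (1 + u))| = |Real.sin (Real.pi * u)| := by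
      rw [this, abs_neg]
    rw [← h3]
    exact Real.abs_sin_le_abs
  calc Real.sin (Real.pi * u) ^ 2 = |Real.sin (Real.pi * u)| * |Real.sin (Real.pi * u)| := by
        rw [← abs_mul, ← sq]; exact (_root_.abs_of_nonneg (sq_nonneg _)).symm
    _ ≤ |Real.pi * (1 - u)| * |Real.pi * (1 + u)| :=
        mul_le_mul h1 h2 (abs_nonneg _) (abs_nonneg _)
    _ = |Real.pi * (1 - u) * (Real.pi * (1 + u))| := (abs_mul _ _).symm
    _ = |Real.pi ^ 2 * (1 - u ^ 2)| := by ring_nf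
    _ = Real.pi ^ 2 * |1 - u ^ 2| := by rw [abs_mul, _root_.abs_of_nonneg (by positivity : (0:ℝ) ≤ Real.pi ^ 2)]

lemma hfun_norm_le (u : ℝ) : ‖hfun u‖ ≤ 4 * (1 + u ^ 2)⁻¹ := by
  have hπ := Real.pi_pos
  unfold hfun
  rw [Complex.norm_real, Real.norm_eq_abs]
  have hrw : |(Real.sin (Real.pi * u) / (Real.pi * u)) ^ 2 * (1 / (1 - u ^ 2))| =
      Real.sin (Real.pi * u) ^ 2 / (Real.pi * u) ^ 2 * (1 / |1 - u ^ 2|) := by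
    rw [abs_mul, abs_div, abs_one, div_pow, _root_.abs_of_nonneg (by positivity : (0:ℝ) ≤ Real.sin (Real.pi*u)^2/(Real.pi*u)^2)]
  rw [hrw]
  have hR : 4 * (1 + u ^ 2)⁻¹ = 4 / (1 + u ^ 2) := by rw [inv_eq_one_div, mul_one_div]
  rw [hR]
  rcases eq_or_ne u 0 with rfl | hu
  · simp
  rcases le_or_gt (u ^ 2) (1/3) with hsmall | hbig
  · have habs : |1 - u ^ 2| = 1 - u ^ 2 := _root_.abs_of_nonneg (by nlinarith)
    have hl1 : Real.sin (Real.pi * u) ^ 2 / (Real.pi * u) ^ 2 ≤ 1 :=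
      (div_le_one (by positivity)).2 (sin_sq_le_A u)
    have hl2 : 1 / |1 - u ^ 2| ≤ 3 / 2 := by
      rw [habs]
      rw [div_le_div_iff₀ (by nlinarith) (by norm_num)]
      nlinarith
    rw [le_div_iff₀ (by positivity)]
    have h0 : 0 ≤ Real.sin (Real.pi * u) ^ 2 / (Real.pi * u) ^ 2 := by positivity
    have h0' : 0 ≤ 1 / |1 - u ^ 2| := by positivity
    have hAB : Real.sin (Real.pi * u) ^ 2 / (Real.pi * u) ^ 2 * (1 / |1 - u ^ 2|) ≤ 3 / 2 := by
      calc Real.sin (Real.pi * u) ^ 2 / (Real.pi * u) ^ 2 * (1 / |1 - u ^ 2|)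
          ≤ 1 * (3/2) := mul_le_mul hl1 hl2 h0' (by norm_num)
        _ = 3/2 := by norm_num
    have hABnn : 0 ≤ Real.sin (Real.pi * u) ^ 2 / (Real.pi * u) ^ 2 * (1 / |1 - u ^ 2|) :=
      mul_nonneg h0 h0'
    nlinarith
  · rcases eq_or_ne (u ^ 2) 1 with h1 | h1
    · rw [show (1:ℝ) - u ^ 2 = 0 by rw [h1]; ring]
      simp only [abs_zero, div_zero, one_div, mul_zero, inv_zero]
      positivity
    · have habs : 0 < |1 - u ^ 2| := abs_pos.2 (by intro h; apply h1; linarith)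
      have key : Real.sin (Real.pi * u) ^ 2 / (Real.pi * u) ^ 2 * (1 / |1 - u ^ 2|) ≤
          1 / u ^ 2 := by
        have e1 : Real.sin (Real.pi * u) ^ 2 / (Real.pi * u) ^ 2 * (1 / |1 - u ^ 2|) =
            Real.sin (Real.pi * u) ^ 2 / ((Real.pi * u) ^ 2 * |1 - u ^ 2|) := by
          field_simp
        have e2 : (1:ℝ) / u ^ 2 =
            Real.pi ^ 2 * |1 - u ^ 2| / ((Real.pi * u) ^ 2 * |1 - u ^ 2|) := by
          field_simp
        rw [e1, e2]
        gcongr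
        exact sin_sq_le_B u
      refine key.trans ?_
      rw [div_le_div_iff₀ (by positivity) (by positivity)]
      nlinarith

lemma hfun_integrable : Integrable hfun := by
  have hmeas : AEStronglyMeasurable hfun volume := by
    apply Continuous.comp_aestronglyMeasurable Complex.continuous_ofReal
    apply Measurable.aestronglyMeasurable
    have m1 : Measurable fun x : ℝ => Real.pi * x := measurable_id.const_mul _
    exact (((Real.measurable_sin.comp m1).div m1).pow_const 2).mul
      (measurable_const.div (measurable_const.sub (measurable_id.pow_const 2)))
  apply Integrable.mono' (integrable_inv_one_add_sq.const_mul 4) hmeas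
  filter_upwards with u
  exact hfun_norm_le u

lemma real_integral_key {u : ℝ} (hu0 : u ≠ 0) (hu1 : u ≠ 1) (hum1 : u ≠ -1) :
    ∫ v in (0:ℝ)..1,
        (1 - v + Real.sin (2 * Real.pi * v) / (2 * Real.pi)) * (2 * Real.cos (2 * Real.pi * u * v))
      = (Real.sin (Real.pi * u) / (Real.pi * u)) ^ 2 * (1 / (1 - u ^ 2)) := by
  have hπ := Real.pi_pos
  set c : ℝ := 2 * Real.pi * u with hc
  have hcne : c ≠ 0 := by
    simp only [hc]
    exact mul_ne_zero (mul_ne_zero two_ne_zero Real.pi_ne_zero) hu0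
  have hp : (2 * Real.pi + c) ≠ 0 := by
    have : 2 * Real.pi + c = 2 * Real.pi * (1 + u) := by rw [hc]; ring
    rw [this]
    exact mul_ne_zero (mul_ne_zero two_ne_zero Real.pi_ne_zero)
      (by intro h; apply hum1; linarith)
  have hm : (2 * Real.pi - c) ≠ 0 := by
    have : 2 * Real.pi - c = 2 * Real.pi * (1 - u) := by rw [hc]; ring
    rw [this]
    exact mul_ne_zero (mul_ne_zero two_ne_zero Real.pi_ne_zero)
      (by intro h; apply hu1; linarith)
  set F : ℝ → ℝ := fun v =>
    2 * ((1 - v) * Real.sin (c * v) / c - Real.cos (c * v) / c ^ 2)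
      - (Real.cos ((2 * Real.pi + c) * v) / (2 * Real.pi + c)
          + Real.cos ((2 * Real.pi - c) * v) / (2 * Real.pi - c)) / (2 * Real.pi) with hF
  have hder : ∀ v ∈ Set.uIcc (0:ℝ) 1, HasDerivAt F
      ((1 - v + Real.sin (2 * Real.pi * v) / (2 * Real.pi)) * (2 * Real.cos (c * v))) v := by
    intro v _
    have idv : HasDerivAt (fun w : ℝ => w) 1 v := hasDerivAt_id v
    have hcv : HasDerivAt (fun w : ℝ => c * w) c v := by simpa using idv.const_mul c
    have hpv : HasDerivAt (fun w : ℝ => (2 * Real.pi + c) * w) (2 * Real.pi + c) v := by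
      simpa using idv.const_mul (2 * Real.pi + c)
    have hmv : HasDerivAt (fun w : ℝ => (2 * Real.pi - c) * w) (2 * Real.pi - c) v := by
      simpa using idv.const_mul (2 * Real.pi - c)
    have h1v : HasDerivAt (fun w : ℝ => 1 - w) (-1) v := by
      simpa using idv.const_sub 1
    have hP1 : HasDerivAt (fun w : ℝ => (1 - w) * Real.sin (c * w) / c)
        (((-1) * Real.sin (c * v) + (1 - v) * (Real.cos (c * v) * c)) / c) v :=
      (h1v.mul hcv.sin).div_const c
    have hP2 : HasDerivAt (fun w : ℝ => Real.cos (c * w) / c ^ 2)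
        ((-Real.sin (c * v) * c) / c ^ 2) v := hcv.cos.div_const _
    have hP3 : HasDerivAt (fun w : ℝ => Real.cos ((2 * Real.pi + c) * w) / (2 * Real.pi + c))
        ((-Real.sin ((2 * Real.pi + c) * v) * (2 * Real.pi + c)) / (2 * Real.pi + c)) v :=
      hpv.cos.div_const _
    have hP4 : HasDerivAt (fun w : ℝ => Real.cos ((2 * Real.pi - c) * w) / (2 * Real.pi - c))
        ((-Real.sin ((2 * Real.pi - c) * v) * (2 * Real.pi - c)) / (2 * Real.pi - c)) v :=
      hmv.cos.div_const _
    have hFder := (((hP1.sub hP2).const_mul 2).sub (((hP3.add hP4)).div_const (2 * Real.pi)))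
    refine hFder.congr_deriv ?_
    have e3 : Real.sin ((2 * Real.pi + c) * v) = Real.sin (2 * Real.pi * v + c * v) := by
      ring_nf
    have e4 : Real.sin ((2 * Real.pi - c) * v) = Real.sin (2 * Real.pi * v - c * v) := by
      ring_nf
    rw [e3, e4, Real.sin_add, Real.sin_sub]
    field_simp
    ring
  have hcont : IntervalIntegrable
      (fun v => (1 - v + Real.sin (2 * Real.pi * v) / (2 * Real.pi)) * (2 * Real.cos (c * v)))
      volume 0 1 := (Continuous.intervalIntegrable (by fun_prop) _ _)
  rw [intervalIntegral.integral_eq_sub_of_hasDerivAt hder hcont]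
  -- now compute F 1 - F 0
  have cos_p : Real.cos (2 * Real.pi + c) = Real.cos c := by
    rw [add_comm, Real.cos_add_two_pi]
  have cos_m : Real.cos (2 * Real.pi - c) = Real.cos c := by
    rw [sub_eq_neg_add, Real.cos_add_two_pi, Real.cos_neg]
  have coshalf : Real.cos c = 1 - 2 * Real.sin (Real.pi * u) ^ 2 := by
    have : c = 2 * (Real.pi * u) := by rw [hc]; ring
    rw [this, Real.cos_two_mul, ← Real.sin_sq_add_cos_sq (Real.pi * u)]
    ring
  rw [hF]
  simp only [mul_one, mul_zero, Real.sin_zero, Real.cos_zero, sub_self, zero_mul, zero_div]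
  rw [cos_p, cos_m, coshalf]
  have h1u : (1:ℝ) - u ^ 2 ≠ 0 := by
    intro h
    rcases mul_self_eq_one_iff.1 (by nlinarith : u * u = 1) with h' | h'
    · exact hu1 h'
    · exact hum1 h'
  have h1p : (1:ℝ) + u ≠ 0 := fun h => hum1 (by linarith)
  have h1m : (1:ℝ) - u ≠ 0 := fun h => hu1 (by linarith)
  rw [hc]
  field_simp
  ring


lemma Hfun_neg (v : ℝ) : Hfun (-v) = Hfun v := by
  unfold Hfun; rw [abs_neg]

lemma fourier_H_eq {u : ℝ} (hu0 : u ≠ 0) (hu1 : u ≠ 1) (hum1 : u ≠ -1) :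
    FourierTransform.fourier Hfun u = hfun u := by
  rw [Real.fourier_real_eq_integral_exp_smul]
  set g : ℝ → ℂ := fun v => Complex.exp (↑(-2 * Real.pi * v * u) * Complex.I) • Hfun v with hg
  have hgcont : Continuous g := by
    apply Continuous.fun_smul _ Hfun_continuous
    fun_prop
  have hsupp : ∀ v ∉ Set.Icc (-1:ℝ) 1, g v = 0 := by
    intro v hv
    have : Hfun v = 0 := by
      apply Hfun_zero_of_ge
      simp only [Set.mem_Icc, not_and_or, not_le] at hv
      rcases hv with h | h
      · rw [abs_of_neg (by linarith)]; linarith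
      · rw [abs_of_pos (by linarith)]; linarith
    rw [hg]; simp [this]
  rw [← setIntegral_eq_integral_of_forall_compl_eq_zero hsupp]
  rw [MeasureTheory.integral_Icc_eq_integral_Ioc,
    ← intervalIntegral.integral_of_le (by norm_num : (-1:ℝ) ≤ 1)]
  rw [← intervalIntegral.integral_add_adjacent_intervals (a := (-1:ℝ)) (b := 0) (c := 1)
    (hgcont.intervalIntegrable _ _) (hgcont.intervalIntegrable _ _)]
  have hneg : ∫ v in (-1:ℝ)..0, g v = ∫ v in (0:ℝ)..1, g (-v) := by
    rw [intervalIntegral.integral_comp_neg (a := (0:ℝ)) (b := 1) (f := g)]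
    norm_num
  have h1 : IntervalIntegrable (fun v : ℝ => g (-v)) volume 0 1 := by
    apply Continuous.intervalIntegrable
    exact hgcont.comp continuous_neg
  have h2 : IntervalIntegrable (fun v : ℝ => g v) volume 0 1 :=
    hgcont.intervalIntegrable _ _
  rw [hneg, ← intervalIntegral.integral_add h1 h2]
  have hcongr : ∫ v in (0:ℝ)..1, (g (-v) + g v) =
      ∫ v in (0:ℝ)..1,
        (((1 - v + Real.sin (2 * Real.pi * v) / (2 * Real.pi))
          * (2 * Real.cos (2 * Real.pi * u * v)) : ℝ) : ℂ) := by
    apply intervalIntegral.integral_congr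
    intro v hv
    rw [Set.uIcc_of_le (by norm_num : (0:ℝ) ≤ 1), Set.mem_Icc] at hv
    have habs : |v| = v := abs_of_nonneg hv.1
    have hH : Hfun v = ((1 - v + Real.sin (2 * Real.pi * v) / (2 * Real.pi) : ℝ) : ℂ) := by
      rw [Hfun_eq_of_mem (by rw [habs]; exact hv.2), habs]
    rw [hg]
    simp only [Hfun_neg]
    rw [hH]
    rw [smul_eq_mul, smul_eq_mul, ← add_mul]
    have e1 : (↑(-2 * Real.pi * -v * u) * Complex.I) = ↑(2 * Real.pi * u * v) * Complex.I := by
      push_cast; ring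
    have e2 : (↑(-2 * Real.pi * v * u) * Complex.I) = -(↑(2 * Real.pi * u * v)) * Complex.I := by
      push_cast; ring
    rw [e1, e2]
    rw [Complex.exp_mul_I, Complex.exp_mul_I]
    push_cast
    simp only [Complex.cos_neg, Complex.sin_neg]
    ring
  rw [hcongr, intervalIntegral.integral_ofReal, real_integral_key hu0 hu1 hum1]
  rfl

lemma FH_ae : (fun v => FourierTransform.fourier Hfun v) =ᵐ[volume] hfun := by
  have hnull : volume ({0, 1, -1} : Set ℝ) = 0 :=
    (Set.toFinite _).measure_zero volume
  filter_upwards [compl_mem_ae_iff.2 hnull] with v hv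
  simp only [Set.mem_compl_iff, Set.mem_insert_iff, Set.mem_singleton_iff, not_or] at hv
  exact fourier_H_eq hv.1 hv.2.1 hv.2.2


/-- The Selberg minorant `h(u) = (sin(πu)/(πu))² / (1−u²)` and
`ĥ(α) = max(1 − |α| + sin(2π|α|)/(2π), 0)` form a Fourier transform pair. -/
theorem selberg_minorant_fourier_pair (α : ℝ) :
    ((max (1 - |α| + Real.sin (2 * Real.pi * |α|) / (2 * Real.pi)) 0 : ℝ) : ℂ) =
      ∫ u : ℝ,
        (((Real.sin (Real.pi * u) / (Real.pi * u)) ^ 2 * (1 / (1 - u ^ 2)) : ℝ) : ℂ) *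
          Complex.exp (2 * Real.pi * Complex.I * α * u) := by
  have FHint : Integrable (FourierTransform.fourier Hfun) :=
    hfun_integrable.congr FH_ae.symm
  have inv := Hfun_integrable.fourierInv_fourier_eq FHint (Hfun_continuous.continuousAt (x := α))
  rw [Real.fourierInv_eq_fourier_neg,
    Real.fourier_real_eq_integral_exp_smul] at inv
  have : Hfun α = ∫ v : ℝ, hfun v * Complex.exp (2 * Real.pi * Complex.I * α * v) := by
    rw [← inv]
    apply MeasureTheory.integral_congr_ae
    filter_upwards [FH_ae] with v hv
    rw [hv, smul_eq_mul, mul_comm]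
    congr 1
    push_cast
    ring
  exact this
end
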